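/- Let d ≥ 1, let ι be a finite set of n variables with d ≤ 2n, and let F be a finite set of clauses over ι, where each clause is a nonempty finite set of at most d literals and a literal is a pair (i, b) with i ∈ ι and b a Boolean. Then there exists a subset F' ⊆ F with |F'| ≤ 2·(2n)^{d−1} such that F' is NAE-satisfiable if and only if F is NAE-satisfiable. -/

import Mathlib

open Finset

section NAE

variable {ι : Type} [Fintype ι] [DecidableEq ι]

/-- A clause is NAE-satisfied by an assignment. -/
def NaeSat (a : ι → Bool) (C : Finset (ι × Bool)) : Prop :=
  (∃ l ∈ C, a l.1 = l.2) ∧ (∃ l ∈ C, a l.1 ≠ l.2)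

/-- A family of clauses is NAE-satisfiable. -/
def FamSat (F : Finset (Finset (ι × Bool))) : Prop :=
  ∃ a : ι → Bool, ∀ C ∈ F, NaeSat a C

/-- Indicator function of a literal. -/
def chi (l : ι × Bool) : (ι → Bool) → ℝ := fun a => if a l.1 = l.2 then 1 else 0

/-- Monomial function attached to a set of literals. -/
def mon (S : Finset (ι × Bool)) : (ι → Bool) → ℝ := fun a => ∏ l ∈ S, chi l a

/-- Number of true literals of a clause. -/
def sVal (C : Finset (ι × Bool)) (a : ι → Bool) : ℕ :=
  (C.filter fun l => a l.1 = l.2).card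

lemma sVal_eq (C : Finset (ι × Bool)) (a : ι → Bool) :
    ((sVal C a : ℝ)) = ∑ l ∈ C, chi l a := by
  rw [sVal, Finset.card_filter]
  push_cast
  simp [chi]

/-- Generators: monomials of degree at most `r`. -/
noncomputable def genSet (ι : Type) [Fintype ι] [DecidableEq ι] (r : ℕ) :
    Finset ((ι → Bool) → ℝ) :=
  ((univ : Finset (ι × Bool)).powerset.filter fun S => S.card ≤ r).image mon

def Wspan (ι : Type) [Fintype ι] [DecidableEq ι] (r : ℕ) :
    Submodule ℝ ((ι → Bool) → ℝ) :=
  Submodule.span ℝ (genSet ι r : Set ((ι → Bool) → ℝ))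

lemma mon_mem_Wspan {r : ℕ} (S : Finset (ι × Bool)) (hS : S.card ≤ r) :
    mon S ∈ Wspan ι r := by
  apply Submodule.subset_span
  simp only [genSet, coe_image, Set.mem_image, mem_coe, mem_filter, mem_powerset]
  exact ⟨S, ⟨subset_univ S, hS⟩, rfl⟩

lemma Wspan_mono {r r' : ℕ} (h : r ≤ r') : Wspan ι r ≤ Wspan ι r' := by
  apply Submodule.span_mono
  intro f hf
  simp only [genSet, coe_image, Set.mem_image, mem_coe, mem_filter, mem_powerset] at hf ⊢
  obtain ⟨S, ⟨h1, h2⟩, h3⟩ := hf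
  exact ⟨S, ⟨h1, h2.trans h⟩, h3⟩

lemma mon_insert (l : ι × Bool) (S : Finset (ι × Bool)) (a : ι → Bool) :
    mon (insert l S) a = chi l a * mon S a := by
  by_cases h : l ∈ S
  · rw [Finset.insert_eq_self.2 h]
    by_cases hc : a l.1 = l.2
    · simp [chi, hc]
    · have h0 : chi l a = 0 := by simp [chi, hc]
      have : mon S a = 0 := Finset.prod_eq_zero h h0
      simp [this]
  · rw [mon, Finset.prod_insert h]; rfl

lemma step_mem (C : Finset (ι × Bool)) (c : ℝ) {r : ℕ} {f : (ι → Bool) → ℝ}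
    (hf : f ∈ Wspan ι r) :
    (fun a => f a * ((sVal C a : ℝ) - c)) ∈ Wspan ι (r + 1) := by
  induction hf using Submodule.span_induction with
  | mem g hg =>
    simp only [genSet, coe_image, Set.mem_image, mem_coe, mem_filter, mem_powerset] at hg
    obtain ⟨S, ⟨-, hS⟩, rfl⟩ := hg
    have key : (fun a => mon S a * ((sVal C a : ℝ) - c)) =
        (∑ l ∈ C, mon (insert l S)) - c • mon S := by
      funext a
      have : (∑ l ∈ C, mon (insert l S)) a = ∑ l ∈ C, chi l a * mon S a := by
        simp only [Finset.sum_apply]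
        exact Finset.sum_congr rfl fun l _ => mon_insert l S a
      simp only [Pi.sub_apply, Pi.smul_apply, smul_eq_mul, this, sVal_eq,
        ← Finset.sum_mul]
      ring
    rw [key]
    apply Submodule.sub_mem
    · apply Submodule.sum_mem
      intro l _
      exact mon_mem_Wspan _ ((Finset.card_insert_le l S).trans (by omega))
    · exact Submodule.smul_mem _ _ (mon_mem_Wspan _ (hS.trans (by omega)))
  | zero =>
    convert Submodule.zero_mem (Wspan ι (r + 1)) using 1
    funext a; simp
  | add g h hg hh ihg ihh =>
    rw [show (fun a => (g + h) a * ((sVal C a : ℝ) - c)) =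
      (fun a => g a * ((sVal C a : ℝ) - c)) + (fun a => h a * ((sVal C a : ℝ) - c)) by
      funext a; simp only [Pi.add_apply]; ring]
    exact Submodule.add_mem _ ihg ihh
  | smul t g hg ihg =>
    rw [show (fun a => (t • g) a * ((sVal C a : ℝ) - c)) =
      t • (fun a => g a * ((sVal C a : ℝ) - c)) by
      funext a; simp only [Pi.smul_apply, smul_eq_mul]; ring]
    exact Submodule.smul_mem _ _ ihg

/-- The clause polynomial. -/
def vFun (C : Finset (ι × Bool)) : (ι → Bool) → ℝ :=
  fun a => ∏ t ∈ Finset.range (C.card - 1), ((sVal C a : ℝ) - (t + 1))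

lemma prodPoly_mem (C : Finset (ι × Bool)) (r : ℕ) :
    (fun a => ∏ t ∈ Finset.range r, ((sVal C a : ℝ) - (t + 1))) ∈ Wspan ι r := by
  induction r with
  | zero =>
    have : (fun (a : ι → Bool) => ∏ t ∈ Finset.range 0, ((sVal C a : ℝ) - (t + 1)))
        = mon (∅ : Finset (ι × Bool)) := by
      funext a; simp [mon]
    rw [this]
    exact mon_mem_Wspan _ (by simp)
  | succ r ih =>
    have : (fun (a : ι → Bool) => ∏ t ∈ Finset.range (r+1), ((sVal C a : ℝ) - (t + 1)))
        = fun a => (∏ t ∈ Finset.range r, ((sVal C a : ℝ) - (t + 1)))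
            * ((sVal C a : ℝ) - ((r : ℝ) + 1)) := by
      funext a; rw [Finset.prod_range_succ]
    rw [this]
    exact step_mem C ((r : ℝ) + 1) ih

lemma vFun_mem (C : Finset (ι × Bool)) {d : ℕ} (hC : C.card ≤ d) :
    vFun C ∈ Wspan ι (d - 1) :=
  Wspan_mono (by omega) (prodPoly_mem C (C.card - 1))

lemma vFun_ne_zero {C : Finset (ι × Bool)} {a : ι → Bool} (h : ¬ NaeSat a C) :
    vFun C a ≠ 0 := by
  rw [NaeSat, not_and_or] at h
  rw [vFun]
  rw [Finset.prod_ne_zero_iff]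
  intro t ht
  rw [Finset.mem_range] at ht
  rcases h with h | h
  · -- no true literal : sVal = 0
    push_neg at h
    have h0 : sVal C a = 0 := by
      rw [sVal, Finset.card_eq_zero, Finset.filter_eq_empty_iff]
      intro l hl
      exact h l hl
    rw [h0]
    push_cast
    have : (0:ℝ) < (t : ℝ) + 1 := by positivity
    linarith
  · -- no false literal : sVal = card
    push_neg at h
    have h0 : sVal C a = C.card := by
      rw [sVal]
      congr 1
      apply Finset.filter_true_of_mem
      intro l hl
      exact h l hl
    rw [h0]
    have h1 : t + 1 < C.card := by omega
    have : (t : ℝ) + 1 < (C.card : ℝ) := by exact_mod_cast h1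
    linarith

lemma vFun_eq_zero {C : Finset (ι × Bool)} {a : ι → Bool} (h : NaeSat a C) :
    vFun C a = 0 := by
  obtain ⟨⟨l1, hl1, he1⟩, ⟨l2, hl2, he2⟩⟩ := h
  have h1 : 1 ≤ sVal C a :=
    Finset.card_pos.2 ⟨l1, Finset.mem_filter.2 ⟨hl1, he1⟩⟩
  have h2 : sVal C a < C.card := by
    apply Finset.card_lt_card
    constructor
    · exact Finset.filter_subset _ _
    · intro hsub
      exact he2 (Finset.mem_filter.1 (hsub hl2)).2
  rw [vFun]
  apply Finset.prod_eq_zero (i := sVal C a - 1)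
  · rw [Finset.mem_range]; omega
  · have : ((sVal C a - 1 : ℕ) : ℝ) + 1 = (sVal C a : ℝ) := by
      push_cast [Nat.cast_sub h1]
      ring
    rw [this]; ring

lemma naeGeom_le (x : ℕ) (hx : 2 ≤ x) : ∀ d, 1 ≤ d →
    ∑ k ∈ Finset.range d, x ^ k ≤ 2 * x ^ (d - 1)
  | 0, h => by omega
  | 1, _ => by simp
  | (d + 2), _ => by
    have ih := naeGeom_le x hx (d + 1) (by omega)
    have h2 : 2 * x ^ d ≤ x ^ (d + 1) := by
      rw [pow_succ]
      calc 2 * x ^ d = x ^ d * 2 := by ring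
        _ ≤ x ^ d * x := Nat.mul_le_mul_left _ hx
    have e1 : d + 2 - 1 = d + 1 := by omega
    have e2 : d + 1 - 1 = d := by omega
    rw [e2] at ih
    rw [e1, Finset.sum_range_succ]
    omega

/-- Core bound: a "minimally unsatisfiable" family is small. -/
lemma core_bound (d n : ℕ) (hd : 1 ≤ d) (hn : Fintype.card ι = n) (hn1 : 1 ≤ n)
    (G : Finset (Finset (ι × Bool))) (hcard : ∀ C ∈ G, C.card ≤ d)
    (hw : ∀ C ∈ G, ∃ a : ι → Bool, (∀ D ∈ G, D ≠ C → NaeSat a D) ∧ ¬ NaeSat a C) :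
    G.card ≤ 2 * (2 * n) ^ (d - 1) := by
  classical
  -- the witness assignments
  choose! w hw1 hw2 using hw
  -- linear independence
  have hli : LinearIndependent ℝ (fun C : {x // x ∈ G} => vFun C.1) := by
    rw [linearIndependent_iff']
    intro s g hsum i hi
    have hev := congrFun hsum (w i.1)
    simp only [Finset.sum_apply, Pi.smul_apply, smul_eq_mul, Pi.zero_apply] at hev
    rw [Finset.sum_eq_single i] at hev
    · have hne := vFun_ne_zero (hw2 i.1 i.2)
      exact (mul_eq_zero.1 hev).resolve_right hne
    · intro j hj hji
      have : NaeSat (w i.1) j.1 := hw1 i.1 i.2 j.1 j.2 (fun h => hji (Subtype.ext h))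
      rw [vFun_eq_zero this, mul_zero]
    · intro h; exact absurd hi h
  -- all vectors live in the span of low-degree monomials
  have hmem : ∀ C : {x // x ∈ G}, vFun C.1 ∈ Wspan ι (d - 1) :=
    fun C => vFun_mem C.1 (hcard C.1 C.2)
  -- restrict to the span
  have hli' : LinearIndependent ℝ
      (fun C : {x // x ∈ G} => (⟨vFun C.1, hmem C⟩ : Wspan ι (d - 1))) := by
    apply LinearIndependent.of_comp (Wspan ι (d - 1)).subtype
    exact hli
  have hfd : FiniteDimensional ℝ (Wspan ι (d - 1)) := by
    apply FiniteDimensional.span_of_finite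
    exact (genSet ι (d - 1)).finite_toSet
  have hcard1 : G.card ≤ Module.finrank ℝ (Wspan ι (d - 1)) := by
    rw [← Fintype.card_coe]
    exact hli'.fintype_card_le_finrank
  have hcard2 : Module.finrank ℝ (Wspan ι (d - 1)) ≤ (genSet ι (d - 1)).card := by
    have := finrank_span_finset_le_card (R := ℝ) (genSet ι (d - 1))
    exact this
  have hcard3 : (genSet ι (d - 1)).card ≤
      ((univ : Finset (ι × Bool)).powerset.filter fun S => S.card ≤ d - 1).card :=
    Finset.card_image_le
  -- counting
  have hcount : ((univ : Finset (ι × Bool)).powerset.filter fun S => S.card ≤ d - 1).card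
      ≤ ∑ k ∈ Finset.range d, (2 * n) ^ k := by
    have hsub : ((univ : Finset (ι × Bool)).powerset.filter fun S => S.card ≤ d - 1)
        ⊆ (Finset.range d).biUnion fun k => Finset.powersetCard k univ := by
      intro S hS
      rw [Finset.mem_filter] at hS
      rw [Finset.mem_biUnion]
      refine ⟨S.card, Finset.mem_range.2 (by omega), ?_⟩
      rw [Finset.mem_powersetCard]
      exact ⟨subset_univ S, rfl⟩
    calc _ ≤ ((Finset.range d).biUnion fun k => Finset.powersetCard k univ).card :=
          Finset.card_le_card hsub
      _ ≤ ∑ k ∈ Finset.range d, (Finset.powersetCard k (univ : Finset (ι × Bool))).card :=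
          Finset.card_biUnion_le
      _ ≤ ∑ k ∈ Finset.range d, (2 * n) ^ k := by
          apply Finset.sum_le_sum
          intro k _
          rw [Finset.card_powersetCard, Finset.card_univ]
          have : Fintype.card (ι × Bool) = 2 * n := by
            rw [Fintype.card_prod, hn, Fintype.card_bool]; ring
          rw [this]
          exact Nat.choose_le_pow _ _
  have hgeom : ∑ k ∈ Finset.range d, (2 * n) ^ k ≤ 2 * (2 * n) ^ (d - 1) :=
    naeGeom_le (2 * n) (by omega) d hd
  omega

/-- Existence of a minimally unsatisfiable subfamily. -/
lemma exists_min_unsat (F : Finset (Finset (ι × Bool))) (hF : ¬ FamSat F) :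
    ∃ G ⊆ F, ¬ FamSat G ∧ ∀ C ∈ G, FamSat (G.erase C) := by
  classical
  induction F using Finset.strongInduction with
  | _ F ih =>
    by_cases h : ∃ C ∈ F, ¬ FamSat (F.erase C)
    · obtain ⟨C, hC, hunsat⟩ := h
      obtain ⟨G, hsub, h1, h2⟩ := ih (F.erase C) (Finset.erase_ssubset hC) hunsat
      exact ⟨G, hsub.trans (Finset.erase_subset _ _), h1, h2⟩
    · push_neg at h
      exact ⟨F, Finset.Subset.refl F, hF, h⟩

end NAE

theorem naeSat_kernel {ι : Type} [Fintype ι] [DecidableEq ι] (d n : ℕ)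
    (hd : 1 ≤ d) (hn : Fintype.card ι = n) (hdn : d ≤ 2 * n)
    (F : Finset (Finset (ι × Bool)))
    (hF : ∀ C ∈ F, C.Nonempty ∧ C.card ≤ d) :
    ∃ F' ⊆ F, F'.card ≤ 2 * (2 * n) ^ (d - 1) ∧
      ((∃ a : ι → Bool, ∀ C ∈ F',
          (∃ l ∈ C, a l.1 = l.2) ∧ (∃ l ∈ C, a l.1 ≠ l.2)) ↔
        (∃ a : ι → Bool, ∀ C ∈ F,
          (∃ l ∈ C, a l.1 = l.2) ∧ (∃ l ∈ C, a l.1 ≠ l.2))) := by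
  classical
  have hn1 : 1 ≤ n := by omega
  by_cases hsat : FamSat F
  · refine ⟨∅, Finset.empty_subset _, by simp, ?_⟩
    constructor
    · intro _
      obtain ⟨a, ha⟩ := hsat
      exact ⟨a, fun C hC => ha C hC⟩
    · intro _
      exact ⟨fun _ => true, by simp⟩
  · obtain ⟨G, hsub, hGunsat, hGmin⟩ := exists_min_unsat F hsat
    have hwit : ∀ C ∈ G, ∃ a : ι → Bool,
        (∀ D ∈ G, D ≠ C → NaeSat a D) ∧ ¬ NaeSat a C := by
      intro C hC
      obtain ⟨a, ha⟩ := hGmin C hC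
      refine ⟨a, fun D hD hDC => ha D (Finset.mem_erase.2 ⟨hDC, hD⟩), ?_⟩
      intro hnae
      apply hGunsat
      refine ⟨a, fun D hD => ?_⟩
      by_cases hDC : D = C
      · rw [hDC]; exact hnae
      · exact ha D (Finset.mem_erase.2 ⟨hDC, hD⟩)
    have hbound : G.card ≤ 2 * (2 * n) ^ (d - 1) :=
      core_bound d n hd hn hn1 G (fun C hC => (hF C (hsub hC)).2) hwit
    refine ⟨G, hsub, hbound, ?_⟩
    constructor
    · intro hGsat
      exact absurd hGsat hGunsat
    · intro hFsat
      exact absurd hFsat hsat
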